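/- For the radiation-dominated universe, a(t) = √t (so b(t) = t², σ∞(τ) = ∞), the following hold for all τ > 0 and σ ≥ 1: t(τ,σ) = τ/σ; χ(τ,σ) = 2√τ·arccos(1/√σ); ρ_τ(σ) = τ·( √(σ−1)/σ + arccos(1/√σ) ); and the proper radius of the Fermi space slice is ρ_{M_τ} = (π/2)·τ. Moreover the Fermi relative speed of a comoving test particle is v_F(σ₀) = √(σ₀−1)/σ₀ + ((σ₀−1)/σ₀)·arccos(1/√σ₀), which is strictly increasing in σ₀ with v_F(σ₀) → π/2 as σ₀ → ∞; in particular superluminal Fermi relative velocities (speeds exceeding 1) occur for σ₀ sufficiently large. -/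

import Mathlib

open Real MeasureTheory Filter Set intervalIntegral

noncomputable section

/-- Synchronous time along the orthogonal spacelike geodesic: t(τ,σ) = b(a(τ)/√σ). -/
def tF (a b : ℝ → ℝ) (τ σ : ℝ) : ℝ := b (a τ / Real.sqrt σ)

/-- Comoving coordinate along the orthogonal spacelike geodesic:
χ(τ,σ) = (1/2)∫₁^σ ḃ(a(τ)/√s) s^{-1/2}(s-1)^{-1/2} ds. -/
def chiF (a b : ℝ → ℝ) (τ σ : ℝ) : ℝ :=
  (1 / 2) * ∫ s in (1:ℝ)..σ, deriv b (a τ / Real.sqrt s) / (Real.sqrt s * Real.sqrt (s - 1))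

/-- Proper arc length along the orthogonal spacelike geodesic:
ρ_τ(σ) = (a(τ)/2)∫₁^σ ḃ(a(τ)/√s) s^{-3/2}(s-1)^{-1/2} ds. -/
def rhoF (a b : ℝ → ℝ) (τ σ : ℝ) : ℝ :=
  (a τ / 2) *
    ∫ s in (1:ℝ)..σ, deriv b (a τ / Real.sqrt s) / (s * Real.sqrt s * Real.sqrt (s - 1))

/-- The Fermi relative speed in the radiation-dominated universe (power-law α = 1/2):
v_F(σ₀) = ∫₁^{σ₀} σ^{-2}(σ-1)^{-1/2} dσ - (1/(2σ₀))∫₁^{σ₀} σ^{-1}(σ-1)^{-1/2} dσ. -/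
def vFrad (σ₀ : ℝ) : ℝ :=
  (∫ σ in (1:ℝ)..σ₀, 1 / (σ ^ 2 * Real.sqrt (σ - 1))) -
    (1 / (2 * σ₀)) * ∫ σ in (1:ℝ)..σ₀, 1 / (σ * Real.sqrt (σ - 1))

lemma integrable_pow (n : ℕ) {σ : ℝ} (hσ : 1 ≤ σ) :
    IntervalIntegrable (fun s => 1 / (s ^ n * Real.sqrt (s - 1))) volume 1 σ := by
  have h0 : IntervalIntegrable (fun x : ℝ => x ^ (-(1/2) : ℝ)) volume 0 (σ - 1) :=
    intervalIntegral.intervalIntegrable_rpow' (by norm_num)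
  have h1 : IntervalIntegrable (fun s : ℝ => (s - 1) ^ (-(1/2) : ℝ)) volume 1 σ := by
    have := h0.comp_sub_right 1
    simpa using this
  have h2 : IntervalIntegrable (fun s : ℝ => 1 / Real.sqrt (s - 1)) volume 1 σ := by
    apply h1.congr
    intro s hs
    rw [uIoc_of_le hσ] at hs
    have hs1 : 0 < s - 1 := by linarith [hs.1]
    dsimp only; rw [Real.sqrt_eq_rpow, Real.rpow_neg hs1.le]; simp [one_div]
  have hcont : ContinuousOn (fun s : ℝ => 1 / s ^ n) (uIcc 1 σ) := by
    apply ContinuousOn.div continuousOn_const (by fun_prop)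
    intro s hs
    rw [uIcc_of_le hσ] at hs
    have : (0:ℝ) < s := by linarith [hs.1]
    positivity
  have := h2.continuousOn_mul hcont
  apply this.congr
  refine fun s _ => ?_
  simp [div_mul_div_comm, mul_comm]

lemma ftc1 {σ : ℝ} (hσ : 1 ≤ σ) :
    ∫ s in (1:ℝ)..σ, 1 / (s * Real.sqrt (s - 1)) =
      2 * Real.arctan (Real.sqrt (σ - 1)) := by
  have key := intervalIntegral.integral_eq_sub_of_hasDeriv_right
    (f := fun s => 2 * Real.arctan (Real.sqrt (s - 1)))
    (f' := fun s => 1 / (s * Real.sqrt (s - 1)))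
    (a := 1) (b := σ)
    ((continuous_const.mul (Real.continuous_arctan.comp
        (Real.continuous_sqrt.comp (continuous_id.sub continuous_const)))).continuousOn)
    (fun x hx => by
      rw [min_eq_left hσ, max_eq_right hσ] at hx
      have hx1 : 0 < x - 1 := by linarith [hx.1]
      have hx0 : 0 < x := by linarith
      have hsq : Real.sqrt (x - 1) ≠ 0 := by positivity
      have h1 : HasDerivAt (fun s : ℝ => s - 1) 1 x := (hasDerivAt_id x).sub_const 1
      have h2 : HasDerivAt (fun s : ℝ => Real.sqrt (s - 1))
          (1 / (2 * Real.sqrt (x - 1))) x := by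
        simpa [Function.comp_def] using (Real.hasDerivAt_sqrt hx1.ne').comp x h1
      have h3 := ((Real.hasDerivAt_arctan (Real.sqrt (x - 1))).comp x h2).const_mul 2
      have heq : 2 * (1 / (1 + Real.sqrt (x - 1) ^ 2) * (1 / (2 * Real.sqrt (x - 1)))) =
          1 / (x * Real.sqrt (x - 1)) := by
        rw [Real.sq_sqrt hx1.le]
        have : 1 + (x - 1) = x := by ring
        rw [this]
        field_simp
      rw [heq] at h3
      exact h3.hasDerivWithinAt)
    (integrable_pow 1 hσ |>.congr (fun s _ => by simp))
  rw [key]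
  simp

lemma ftc2 {σ : ℝ} (hσ : 1 ≤ σ) :
    ∫ s in (1:ℝ)..σ, 1 / (s ^ 2 * Real.sqrt (s - 1)) =
      Real.sqrt (σ - 1) / σ + Real.arctan (Real.sqrt (σ - 1)) := by
  have key := intervalIntegral.integral_eq_sub_of_hasDeriv_right
    (f := fun s => Real.sqrt (s - 1) / s + Real.arctan (Real.sqrt (s - 1)))
    (f' := fun s => 1 / (s ^ 2 * Real.sqrt (s - 1)))
    (a := 1) (b := σ)
    (by
      apply ContinuousOn.add
      · apply ContinuousOn.div (by fun_prop) continuousOn_id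
        intro s hs
        rw [uIcc_of_le hσ] at hs
        have : (0:ℝ) < s := by linarith [hs.1]
        exact this.ne'
      · exact (Real.continuous_arctan.comp
          (Real.continuous_sqrt.comp (continuous_id.sub continuous_const))).continuousOn)
    (fun x hx => by
      rw [min_eq_left hσ, max_eq_right hσ] at hx
      have hx1 : 0 < x - 1 := by linarith [hx.1]
      have hx0 : 0 < x := by linarith
      have hsq : Real.sqrt (x - 1) ≠ 0 := by positivity
      have hss : Real.sqrt (x - 1) * Real.sqrt (x - 1) = x - 1 :=
        Real.mul_self_sqrt hx1.le
      have h1 : HasDerivAt (fun s : ℝ => s - 1) 1 x := (hasDerivAt_id x).sub_const 1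
      have h2 : HasDerivAt (fun s : ℝ => Real.sqrt (s - 1))
          (1 / (2 * Real.sqrt (x - 1))) x := by
        simpa [Function.comp_def] using (Real.hasDerivAt_sqrt hx1.ne').comp x h1
      have h3 : HasDerivAt (fun s : ℝ => Real.sqrt (s - 1) / s)
          ((1 / (2 * Real.sqrt (x - 1)) * x - Real.sqrt (x - 1) * 1) / x ^ 2) x :=
        h2.div (hasDerivAt_id x) hx0.ne'
      have h4 := (Real.hasDerivAt_arctan (Real.sqrt (x - 1))).comp x h2
      have h5 := h3.add h4
      have heq : (1 / (2 * Real.sqrt (x - 1)) * x - Real.sqrt (x - 1) * 1) / x ^ 2 +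
          1 / (1 + Real.sqrt (x - 1) ^ 2) * (1 / (2 * Real.sqrt (x - 1))) =
          1 / (x ^ 2 * Real.sqrt (x - 1)) := by
        rw [Real.sq_sqrt hx1.le]
        have h6 : 1 + (x - 1) = x := by ring
        rw [h6]
        field_simp
        linear_combination (-2) * hss
      rw [heq] at h5
      exact h5.hasDerivWithinAt)
    (integrable_pow 2 hσ)
  rw [key]
  simp

lemma arccos_eq {σ : ℝ} (hσ : 1 ≤ σ) :
    Real.arccos (1 / Real.sqrt σ) = Real.arctan (Real.sqrt (σ - 1)) := by
  rcases eq_or_lt_of_le hσ with rfl | h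
  · norm_num
  · have h0 : (0:ℝ) < σ := by linarith
    rw [Real.arccos_eq_arctan (by positivity)]
    congr 1
    have h1 : (1 / Real.sqrt σ) ^ 2 = 1 / σ := by
      rw [div_pow, one_pow, Real.sq_sqrt h0.le]
    rw [h1, div_div_eq_mul_div, div_one, ← Real.sqrt_mul (by
      rw [sub_nonneg]
      rw [div_le_one h0]
      linarith) σ]
    congr 1
    field_simp

def hfun (u : ℝ) : ℝ := u / (1 + u ^ 2) + u ^ 2 / (1 + u ^ 2) * Real.arctan u

lemma hfun_hasDerivAt (u : ℝ) :
    HasDerivAt hfun ((1 + 2 * u * Real.arctan u) / (1 + u ^ 2) ^ 2) u := by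
  have hne : (1:ℝ) + u ^ 2 ≠ 0 := by positivity
  have hu2 : HasDerivAt (fun u : ℝ => 1 + u ^ 2) (2 * u) u := by
    simpa using (hasDerivAt_pow 2 u).const_add 1
  have hupow : HasDerivAt (fun u : ℝ => u ^ 2) (2 * u) u := by
    simpa using hasDerivAt_pow 2 u
  have p1 : HasDerivAt (fun u : ℝ => u / (1 + u ^ 2))
      ((1 * (1 + u ^ 2) - u * (2 * u)) / (1 + u ^ 2) ^ 2) u :=
    (hasDerivAt_id u).div hu2 hne
  have p2 : HasDerivAt (fun u : ℝ => u ^ 2 / (1 + u ^ 2))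
      ((2 * u * (1 + u ^ 2) - u ^ 2 * (2 * u)) / (1 + u ^ 2) ^ 2) u :=
    hupow.div hu2 hne
  have p3 := p2.mul (Real.hasDerivAt_arctan u)
  have total := p1.add p3
  have heq : (1 * (1 + u ^ 2) - u * (2 * u)) / (1 + u ^ 2) ^ 2 +
      ((2 * u * (1 + u ^ 2) - u ^ 2 * (2 * u)) / (1 + u ^ 2) ^ 2 * Real.arctan u +
        u ^ 2 / (1 + u ^ 2) * (1 / (1 + u ^ 2))) =
      (1 + 2 * u * Real.arctan u) / (1 + u ^ 2) ^ 2 := by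
    field_simp
    ring
  rw [heq] at total
  exact total

lemma hfun_strictMono : StrictMono hfun := by
  apply strictMono_of_deriv_pos
  intro u
  rw [(hfun_hasDerivAt u).deriv]
  apply div_pos _ (by positivity)
  have : 0 ≤ u * Real.arctan u := by
    rcases le_or_gt 0 u with h | h
    · exact mul_nonneg h (by simpa using Real.arctan_strictMono.monotone h)
    · have ha : Real.arctan u ≤ 0 := by simpa using Real.arctan_strictMono.monotone h.le
      nlinarith
  nlinarith

lemma sqrt_tendsto_atTop : Tendsto Real.sqrt atTop atTop := by
  apply tendsto_atTop_atTop.2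
  intro b
  refine ⟨b ^ 2, fun x hx => ?_⟩
  calc b ≤ |b| := le_abs_self b
    _ = Real.sqrt (b ^ 2) := (Real.sqrt_sq_eq_abs b).symm
    _ ≤ Real.sqrt x := Real.sqrt_le_sqrt hx

lemma tendsto_sqrt_sub_one : Tendsto (fun σ : ℝ => Real.sqrt (σ - 1)) atTop atTop :=
  sqrt_tendsto_atTop.comp (tendsto_atTop_add_const_right atTop (-1) tendsto_id)

lemma tendsto_arctan_sqrt :
    Tendsto (fun σ : ℝ => Real.arctan (Real.sqrt (σ - 1))) atTop (nhds (π / 2)) :=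
  (Real.tendsto_arctan_atTop.mono_right nhdsWithin_le_nhds).comp tendsto_sqrt_sub_one

lemma tendsto_sqrt_div : Tendsto (fun σ : ℝ => Real.sqrt (σ - 1) / σ) atTop (nhds 0) := by
  have hb : Tendsto (fun σ : ℝ => 1 / Real.sqrt σ) atTop (nhds 0) := by
    simpa [one_div, Pi.inv_def] using sqrt_tendsto_atTop.inv_tendsto_atTop
  apply tendsto_of_tendsto_of_tendsto_of_le_of_le' tendsto_const_nhds hb
  · filter_upwards [eventually_ge_atTop (1:ℝ)] with σ hσ
    positivity
  · filter_upwards [eventually_ge_atTop (1:ℝ)] with σ hσ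
    have h0 : (0:ℝ) < σ := by linarith
    have h1 : Real.sqrt (σ - 1) ≤ Real.sqrt σ := Real.sqrt_le_sqrt (by linarith)
    have h2 : Real.sqrt σ / σ = 1 / Real.sqrt σ := by
      rw [eq_div_iff (by positivity), div_mul_eq_mul_div, Real.mul_self_sqrt h0.le,
        div_self h0.ne']
    calc Real.sqrt (σ - 1) / σ ≤ Real.sqrt σ / σ := by
          gcongr
      _ = 1 / Real.sqrt σ := h2

lemma chiF_eq {τ σ : ℝ} (hτ : 0 ≤ τ) (hσ : 1 ≤ σ) :
    chiF (fun t => Real.sqrt t) (fun t => t ^ 2) τ σ =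
      2 * Real.sqrt τ * Real.arctan (Real.sqrt (σ - 1)) := by
  unfold chiF
  rw [intervalIntegral.integral_congr (g := fun s =>
      2 * Real.sqrt τ * (1 / (s * Real.sqrt (s - 1)))) (by
    intro s hs
    rw [uIcc_of_le hσ] at hs
    have hs1 : (1:ℝ) ≤ s := hs.1
    have hs0 : (0:ℝ) < s := by linarith
    have hss : Real.sqrt s * Real.sqrt s = s := Real.mul_self_sqrt hs0.le
    have hd : deriv (fun t : ℝ => t ^ 2) (Real.sqrt τ / Real.sqrt s) =
        2 * (Real.sqrt τ / Real.sqrt s) := by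
      simp [deriv_pow]
    simp only [hd]
    set u := Real.sqrt (s - 1) with hu
    by_cases hz : u = 0
    · simp [hz]
    · have hrs : Real.sqrt s ≠ 0 := by positivity
      field_simp
      linear_combination (-Real.sqrt τ) * hss)]
  rw [intervalIntegral.integral_const_mul, ftc1 hσ]
  ring

lemma rhoF_eq {τ σ : ℝ} (hτ : 0 ≤ τ) (hσ : 1 ≤ σ) :
    rhoF (fun t => Real.sqrt t) (fun t => t ^ 2) τ σ =
      τ * (Real.sqrt (σ - 1) / σ + Real.arctan (Real.sqrt (σ - 1))) := by
  unfold rhoF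
  rw [intervalIntegral.integral_congr (g := fun s =>
      2 * Real.sqrt τ * (1 / (s ^ 2 * Real.sqrt (s - 1)))) (by
    intro s hs
    rw [uIcc_of_le hσ] at hs
    have hs1 : (1:ℝ) ≤ s := hs.1
    have hs0 : (0:ℝ) < s := by linarith
    have hss : Real.sqrt s * Real.sqrt s = s := Real.mul_self_sqrt hs0.le
    have hd : deriv (fun t : ℝ => t ^ 2) (Real.sqrt τ / Real.sqrt s) =
        2 * (Real.sqrt τ / Real.sqrt s) := by
      simp [deriv_pow]
    simp only [hd]
    set u := Real.sqrt (s - 1) with hu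
    by_cases hz : u = 0
    · simp [hz]
    · have hrs : Real.sqrt s ≠ 0 := by positivity
      field_simp
      linear_combination (-Real.sqrt τ) * hss)]
  rw [intervalIntegral.integral_const_mul, ftc2 hσ]
  have : Real.sqrt τ * Real.sqrt τ = τ := Real.mul_self_sqrt hτ
  linear_combination (Real.sqrt (σ - 1) / σ + Real.arctan (Real.sqrt (σ - 1))) * this

lemma vF_eq {σ₀ : ℝ} (hσ : 1 < σ₀) :
    vFrad σ₀ = Real.sqrt (σ₀ - 1) / σ₀ +
      ((σ₀ - 1) / σ₀) * Real.arctan (Real.sqrt (σ₀ - 1)) := by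
  unfold vFrad
  rw [ftc1 hσ.le, ftc2 hσ.le]
  have h0 : σ₀ ≠ 0 := by positivity
  field_simp
  ring

lemma vF_hfun {x : ℝ} (hx : 1 < x) : vFrad x = hfun (Real.sqrt (x - 1)) := by
  rw [vF_eq hx]
  unfold hfun
  rw [Real.sq_sqrt (by linarith : (0:ℝ) ≤ x - 1)]
  have : 1 + (x - 1) = x := by ring
  rw [this]

lemma ratio_tendsto : Tendsto (fun σ : ℝ => (σ - 1) / σ) atTop (nhds 1) := by
  have h : Tendsto (fun σ : ℝ => 1 - σ⁻¹) atTop (nhds (1 - 0)) :=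
    tendsto_const_nhds.sub tendsto_inv_atTop_zero
  rw [sub_zero] at h
  apply h.congr'
  filter_upwards [eventually_gt_atTop (0:ℝ)] with σ hσ
  field_simp

lemma vF_tendsto : Tendsto vFrad atTop (nhds (π / 2)) := by
  have h : Tendsto (fun σ₀ : ℝ => Real.sqrt (σ₀ - 1) / σ₀ +
      ((σ₀ - 1) / σ₀) * Real.arctan (Real.sqrt (σ₀ - 1))) atTop (nhds (0 + 1 * (π / 2))) :=
    tendsto_sqrt_div.add (ratio_tendsto.mul tendsto_arctan_sqrt)
  rw [show (0:ℝ) + 1 * (π / 2) = π / 2 by ring] at h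
  apply h.congr'
  filter_upwards [eventually_gt_atTop (1:ℝ)] with σ₀ hσ₀
  exact (vF_eq hσ₀).symm

/-- the radiation-dominated universe a(t) = √t, b(t) = t²:
explicit formulas for t(τ,σ), χ(τ,σ), ρ_τ(σ), the proper radius ρ_{M_τ} = (π/2)τ, and
the Fermi relative speed, which is strictly increasing, tends to π/2, and is eventually
superluminal (exceeds 1). -/
theorem radiation_dominated_universe (τ : ℝ) (hτ : 0 < τ) :
    (∀ σ : ℝ, 1 ≤ σ →
      -- t(τ,σ) = τ/σ
      tF (fun t => Real.sqrt t) (fun t => t ^ 2) τ σ = τ / σ ∧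
      -- χ(τ,σ) = 2√τ·arccos(1/√σ)
      chiF (fun t => Real.sqrt t) (fun t => t ^ 2) τ σ =
        2 * Real.sqrt τ * Real.arccos (1 / Real.sqrt σ) ∧
      -- ρ_τ(σ) = τ·(√(σ-1)/σ + arccos(1/√σ))
      rhoF (fun t => Real.sqrt t) (fun t => t ^ 2) τ σ =
        τ * (Real.sqrt (σ - 1) / σ + Real.arccos (1 / Real.sqrt σ))) ∧
    -- ρ_{M_τ} = lim_{σ→∞} ρ_τ(σ) = (π/2)·τ
    Tendsto (rhoF (fun t => Real.sqrt t) (fun t => t ^ 2) τ) atTop (nhds (π / 2 * τ)) ∧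
    -- v_F(σ₀) = √(σ₀-1)/σ₀ + ((σ₀-1)/σ₀)·arccos(1/√σ₀)
    (∀ σ₀ : ℝ, 1 < σ₀ →
      vFrad σ₀ =
        Real.sqrt (σ₀ - 1) / σ₀ + ((σ₀ - 1) / σ₀) * Real.arccos (1 / Real.sqrt σ₀)) ∧
    -- v_F is strictly increasing on (1,∞)
    StrictMonoOn vFrad (Set.Ioi 1) ∧
    -- v_F(σ₀) → π/2 as σ₀ → ∞
    Tendsto vFrad atTop (nhds (π / 2)) ∧
    -- superluminal Fermi speeds occur for σ₀ sufficiently large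
    (∀ᶠ σ₀ in atTop, 1 < vFrad σ₀) := by
  refine ⟨?_, ?_, ?_, ?_, vF_tendsto, ?_⟩
  · intro σ hσ
    have h0 : (0:ℝ) < σ := by linarith
    refine ⟨?_, ?_, ?_⟩
    · show (Real.sqrt τ / Real.sqrt σ) ^ 2 = τ / σ
      rw [div_pow, Real.sq_sqrt hτ.le, Real.sq_sqrt h0.le]
    · rw [chiF_eq hτ.le hσ, arccos_eq hσ]
    · rw [rhoF_eq hτ.le hσ, arccos_eq hσ]
  · have h : Tendsto (fun σ : ℝ => τ * (Real.sqrt (σ - 1) / σ +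
        Real.arctan (Real.sqrt (σ - 1)))) atTop (nhds (τ * (0 + π / 2))) :=
      (tendsto_sqrt_div.add tendsto_arctan_sqrt).const_mul τ
    rw [show τ * (0 + π / 2) = π / 2 * τ by ring] at h
    apply h.congr'
    filter_upwards [eventually_ge_atTop (1:ℝ)] with σ hσ
    exact (rhoF_eq hτ.le hσ).symm
  · intro σ₀ hσ₀
    rw [vF_eq hσ₀, arccos_eq hσ₀.le]
  · intro a ha b hb hab
    rw [vF_hfun ha, vF_hfun hb]
    exact hfun_strictMono (Real.sqrt_lt_sqrt (by simp at ha ⊢; linarith)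
      (by simp at ha hb ⊢; linarith))
  · have h12 : (1:ℝ) < π / 2 := by
      have := Real.pi_gt_three
      linarith
    exact vF_tendsto.eventually_const_lt h12
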